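/- Let ν be a positive Borel measure supported on [0,1]. Then for every z in the unit disc 𝔻, |∫₀¹ dν(r)/(1−rz)| ≥ (1/√2)·∫₀¹ dν(r)/|1−rz|. -/

import Mathlib

open MeasureTheory Complex Set Filter
open scoped ENNReal NNReal Real Classical

noncomputable section

/-- The open unit disc in `ℂ`. -/
def unitDisc : Set ℂ := Metric.ball 0 1

/-- The moment `ω_n = ∫₀¹ rⁿ dω(r)`. -/
def momNat (ω : Measure ℝ) (n : ℕ) : ℝ := ∫ r, r ^ n ∂ω

/-- The Bergman reproducing kernel `B^ω_z(ζ) = Σ (ζ conj z)ⁿ/(2 ω_{2n+1})`. -/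
def bergmanKernel (ω : Measure ℝ) (z ζ : ℂ) : ℂ :=
  ∑' n : ℕ, (ζ * (starRingEnd ℂ) z) ^ n / (2 * (momNat ω (2 * n + 1) : ℂ))

/-- The measure `ω⊗m` on the unit disc: `d(ω⊗m)(re^{iθ}) = r dω(r) dθ`. -/
def polarMeasure (ω : Measure ℝ) : Measure ℂ :=
  Measure.map (fun p : ℝ × ℝ => (p.1 : ℂ) * Complex.exp ((p.2 : ℂ) * Complex.I))
    ((ω.withDensity fun r => ENNReal.ofReal r).prod
      (volume.restrict (Set.Ico (0 : ℝ) (2 * Real.pi))))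

/-- The class `D̂`: `ω̂(r) ≤ C ω̂((1+r)/2)`. -/
def DhatClass (ω : Measure ℝ) : Prop :=
  ∃ C : ℝ≥0, ∀ r : ℝ, 0 ≤ r → r < 1 →
    ω (Set.Ico r 1) ≤ (C : ℝ≥0∞) * ω (Set.Ico ((1 + r) / 2) 1)

/-- The class `R` of regular measures on `[0,1)`. -/
def RClass (ω : Measure ℝ) : Prop :=
  ∃ C g b : ℝ, 0 < C ∧ 0 < g ∧ g ≤ b ∧
    ∀ r t : ℝ, 0 ≤ r → r ≤ t → t < 1 →
      ENNReal.ofReal (C⁻¹ * ((1 - r) / (1 - t)) ^ g) * ω (Set.Ico t 1) ≤ ω (Set.Ico r 1) ∧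
      ω (Set.Ico r 1) ≤ ENNReal.ofReal (C * ((1 - r) / (1 - t)) ^ b) * ω (Set.Ico t 1)

/-- `ω([a,b]) ≍ ω([a,(a+b)/2]) ≍ ω([(a+b)/2,b])`. -/
def Halving (ω : Measure ℝ) : Prop :=
  ∃ C : ℝ≥0, 0 < C ∧ ∀ a b : ℝ, 0 ≤ a → a ≤ b → b ≤ 1 →
    (ω (Set.Icc a b) ≤ (C : ℝ≥0∞) * ω (Set.Icc a ((a + b) / 2)) ∧
      ω (Set.Icc a ((a + b) / 2)) ≤ (C : ℝ≥0∞) * ω (Set.Icc a b)) ∧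
    (ω (Set.Icc a b) ≤ (C : ℝ≥0∞) * ω (Set.Icc ((a + b) / 2) b) ∧
      ω (Set.Icc ((a + b) / 2) b) ≤ (C : ℝ≥0∞) * ω (Set.Icc a b))

/-- The Carleson square over the arc of normalized length `h` starting at angle `θ₀`. -/
def carlesonSquare (θ₀ h : ℝ) : Set ℂ :=
  {z : ℂ | 1 - h ≤ ‖z‖ ∧ ‖z‖ < 1 ∧
    ∃ θ ∈ Set.Ico θ₀ (θ₀ + 2 * Real.pi * h),
      z = ((‖z‖ : ℝ) : ℂ) * Complex.exp ((θ : ℂ) * Complex.I)}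

/-- The top half of the Carleson square. -/
def carlesonTop (θ₀ h : ℝ) : Set ℂ :=
  {z : ℂ | 1 - h ≤ ‖z‖ ∧ ‖z‖ < 1 - h / 2 ∧
    ∃ θ ∈ Set.Ico θ₀ (θ₀ + 2 * Real.pi * h),
      z = ((‖z‖ : ℝ) : ℂ) * Complex.exp ((θ : ℂ) * Complex.I)}

/-- The Carleson square `S(I^β_{j,m})` over the dyadic arc `I^β_{j,m}`, of
normalized length `2/2^j`. -/
def dyadicSq (β : ℝ) (j m : ℕ) : Set ℂ :=
  carlesonSquare (4 * Real.pi * ((m : ℝ) + β) / 2 ^ j) (2 / 2 ^ j)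

/-- The top half `T(I^β_{j,m})`. -/
def dyadicTop (β : ℝ) (j m : ℕ) : Set ℂ :=
  carlesonTop (4 * Real.pi * ((m : ℝ) + β) / 2 ^ j) (2 / 2 ^ j)

/-- The Bergman projection `P_ω`. -/
def bergmanProj (ω : Measure ℝ) (f : ℂ → ℂ) (z : ℂ) : ℂ :=
  ∫ ζ, f ζ * (starRingEnd ℂ) (bergmanKernel ω z ζ) ∂(polarMeasure ω)

/-- The maximal Bergman projection `P⁺_ω`. -/
def bergmanProjPlus (ω : Measure ℝ) (f : ℂ → ℂ) (z : ℂ) : ℂ :=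
  ∫ ζ, f ζ * ((‖bergmanKernel ω z ζ‖ : ℝ) : ℂ) ∂(polarMeasure ω)

/-- `B^ω_z` admits the representation (*) with exponent `γ ≥ 1` and a positive
measure `ν` supported on `[0,1]`. -/
def KernelRep (ω : Measure ℝ) (γ : ℝ) (ν : Measure ℝ) : Prop :=
  1 ≤ γ ∧ ν (Set.Icc (0 : ℝ) 1)ᶜ = 0 ∧
  ∀ z ∈ unitDisc, ∀ ζ ∈ unitDisc,
    bergmanKernel ω z ζ =
      (1 - (starRingEnd ℂ) z * ζ) ^ (-(γ : ℂ)) *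
        ∫ r : ℝ, (1 - (r : ℂ) * ((starRingEnd ℂ) z * ζ))⁻¹ ∂ν

/-- The Bekollé–Bonami characteristic `B_{p,μ}(v)`, a supremum over all Carleson squares. -/
def BpConst (p : ℝ) (μ : Measure ℂ) (v : ℂ → ℝ) : ℝ≥0∞ :=
  ⨆ (θ₀ : ℝ) (h : ℝ) (_ : 0 < h) (_ : h ≤ 1),
    ((∫⁻ z in carlesonSquare θ₀ h, ENNReal.ofReal (v z) ∂μ) / μ (carlesonSquare θ₀ h)) *
      ((∫⁻ z in carlesonSquare θ₀ h, ENNReal.ofReal (v z ^ (-(1 / (p - 1)))) ∂μ) /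
          μ (carlesonSquare θ₀ h)) ^ (p - 1)

/-- An `ω`-weight: positive on the disc and `(ω⊗m)`-integrable. -/
def IsWeight (μ : Measure ℂ) (v : ℂ → ℝ) : Prop :=
  (∀ z ∈ unitDisc, 0 < v z) ∧ ∫⁻ z, ENNReal.ofReal (v z) ∂μ < ⊤

/-- The weighted maximal function `M_ω`. -/
def maxFn (μ : Measure ℂ) (v : ℂ → ℝ) (z : ℂ) : ℝ≥0∞ :=
  ⨆ (a : ℂ) (r : ℝ) (_ : z ∈ Metric.ball a r),
    (∫⁻ ζ in Metric.ball a r ∩ unitDisc, ENNReal.ofReal (v ζ) ∂μ) /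
      μ (Metric.ball a r ∩ unitDisc)

/-- The class `B_{1,ω}`: `M_ω(v) ≤ C v` almost everywhere. -/
def B1Class (μ : Measure ℂ) (v : ℂ → ℝ) : Prop :=
  ∃ C : ℝ≥0, ∀ᵐ z ∂μ, maxFn μ v z ≤ (C : ℝ≥0∞) * ENNReal.ofReal (v z)

/-- The weighted `L^p` norm `(∫ |f|^p v dμ)^{1/p}`. -/
def lpNorm (μ : Measure ℂ) (p : ℝ) (v : ℂ → ℝ) (f : ℂ → ℂ) : ℝ≥0∞ :=
  (∫⁻ z, (‖f z‖₊ : ℝ≥0∞) ^ p * ENNReal.ofReal (v z) ∂μ) ^ (1 / p)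

/-- `Ψ` is essentially decreasing on `(0,2)`. -/
def EssDecreasingOn (Ψ : ℝ → ℝ) : Prop :=
  ∃ C : ℝ, ∀ s t : ℝ, 0 < s → s ≤ t → t < 2 → Ψ t ≤ C * Ψ s

/-- The kernel `K_Ψ(z,ζ) = Ψ(|1 - conj ζ z|)/|1 - conj ζ z|`. -/
def Kpsi (Ψ : ℝ → ℝ) (z ζ : ℂ) : ℝ :=
  Ψ ‖1 - (starRingEnd ℂ) ζ * z‖ / ‖1 - (starRingEnd ℂ) ζ * z‖

/-- The dyadic kernel `K^β_Ψ(z,ζ) = Σ_{I ∈ D^β} 1_{S(I)}(z) 1_{S(I)}(ζ) Ψ(|I|)/|I|`. -/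
def KpsiDyadic (Ψ : ℝ → ℝ) (β : ℝ) (z ζ : ℂ) : ℝ :=
  ∑' jm : ℕ × ℕ,
    if jm.2 < 2 ^ jm.1 ∧ z ∈ dyadicSq β jm.1 jm.2 ∧ ζ ∈ dyadicSq β jm.1 jm.2 then
      Ψ (2 / 2 ^ jm.1) / (2 / 2 ^ jm.1)
    else 0

/-- The dyadic weighted maximal function `M_{ν,D^β}`. -/
def dyadicMax (ν : Measure ℂ) (β : ℝ) (f : ℂ → ℂ) (z : ℂ) : ℝ≥0∞ :=
  ⨆ (jm : ℕ × ℕ) (_ : jm.2 < 2 ^ jm.1) (_ : z ∈ dyadicSq β jm.1 jm.2),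
    (∫⁻ ζ in dyadicSq β jm.1 jm.2, (‖f ζ‖₊ : ℝ≥0∞) ∂ν) / ν (dyadicSq β jm.1 jm.2)

/-- The dyadic operator `P^β_{Ψ,μ}(f) = Σ_{I ∈ D^β} ⟨f, 1_{S(I)} Ψ(|I|)/|I|⟩_{L²_μ} 1_{S(I)}`. -/
def dyadicOpPsi (μ : Measure ℂ) (ψ : ℝ → ℝ) (β : ℝ) (f : ℂ → ℂ) (z : ℂ) : ℂ :=
  ∑' jm : ℕ × ℕ,
    if jm.2 < 2 ^ jm.1 ∧ z ∈ dyadicSq β jm.1 jm.2 then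
      ((ψ (2 / 2 ^ jm.1) / (2 / 2 ^ jm.1) : ℝ) : ℂ) * ∫ ζ in dyadicSq β jm.1 jm.2, f ζ ∂μ
    else 0

/-- The maximal operator `P⁺_{Ψ,μ}(f)(z) = ∫ |Ψ(1-conj ζ z)/(1-conj ζ z)| f(ζ) dμ(ζ)`. -/
def PplusPsi (μ : Measure ℂ) (Ψ : ℂ → ℂ) (f : ℂ → ℂ) (z : ℂ) : ℂ :=
  ∫ ζ, ((‖Ψ (1 - (starRingEnd ℂ) ζ * z)‖ /
      ‖1 - (starRingEnd ℂ) ζ * z‖ : ℝ) : ℂ) * f ζ ∂μ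

/-- Euclidean distance between two sets, as an `ℝ≥0∞`-valued infimum. -/
def setEDist (A B : Set ℂ) : ℝ≥0∞ := ⨅ a ∈ A, ⨅ b ∈ B, edist a b

/-- The polar rectangle `{re^{iθ} : r ∈ [r₁,r₂), θ ∈ [θ₁,θ₂)}`. -/
def polarRect (r₁ r₂ θ₁ θ₂ : ℝ) : Set ℂ :=
  {z : ℂ | ∃ r θ : ℝ, r ∈ Set.Ico r₁ r₂ ∧ θ ∈ Set.Ico θ₁ θ₂ ∧
    z = (r : ℂ) * Complex.exp ((θ : ℂ) * Complex.I)}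

/-- The generation-`k` dyadic polar subrectangle, with indices `i, l < 2^k`, of the
Carleson square over the half-circle starting at angle `θ₀`. -/
def dyadicPolarRect (θ₀ : ℝ) (k i l : ℕ) : Set ℂ :=
  polarRect (1 / 2 + (i : ℝ) / 2 ^ (k + 1)) (1 / 2 + ((i : ℝ) + 1) / 2 ^ (k + 1))
    (θ₀ + (l : ℝ) * Real.pi / 2 ^ k) (θ₀ + ((l : ℝ) + 1) * Real.pi / 2 ^ k)

/-- The dyadic positive operator `T(f) = Σ_{I ∈ D^β} τ_{S(I)} (E^μ_{S(I)} f) 1_{S(I)}`. -/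
def dyadicPosOp (μ : Measure ℂ) (β : ℝ) (τ : ℕ × ℕ → ℝ) (f : ℂ → ℂ) (z : ℂ) : ℂ :=
  ∑' jm : ℕ × ℕ,
    if jm.2 < 2 ^ jm.1 ∧ z ∈ dyadicSq β jm.1 jm.2 then
      ((τ jm / (μ (dyadicSq β jm.1 jm.2)).toReal : ℝ) : ℂ) *
        ∫ ζ in dyadicSq β jm.1 jm.2, f ζ ∂μ
    else 0


/-- inequality (4): `|∫₀¹ dν(r)/(1-rz)| ≥ (1/√2) ∫₀¹ dν(r)/|1-rz|`
for all `z` in the unit disc. -/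
theorem nu_integral_modulus_lower_bound
    (ν : Measure ℝ) [IsFiniteMeasure ν] (hsupp : ν (Set.Icc (0 : ℝ) 1)ᶜ = 0) :
    ∀ z ∈ unitDisc,
      (Real.sqrt 2)⁻¹ * ∫ r : ℝ, (‖1 - (r : ℂ) * z‖)⁻¹ ∂ν ≤
        ‖∫ r : ℝ, (1 - (r : ℂ) * z)⁻¹ ∂ν‖ := by
  intro z hz
  have hz1 : ‖z‖ < 1 := by
    simpa using mem_ball_zero_iff.mp hz
  have hpos : (0:ℝ) < 1 - ‖z‖ := by linarith
  have hae : ∀ᵐ r ∂ν, r ∈ Set.Icc (0:ℝ) 1 := by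
    rw [MeasureTheory.ae_iff]
    simpa [Set.compl_def] using hsupp
  set f : ℝ → ℂ := fun r => (1 - (r:ℂ) * z)⁻¹ with hf
  have hbound : ∀ r ∈ Set.Icc (0:ℝ) 1, 1 - ‖z‖ ≤ ‖1 - (r:ℂ)*z‖ := by
    intro r hr
    have h1 : ‖(r:ℂ)*z‖ ≤ ‖z‖ := by
      rw [norm_mul, Complex.norm_real, Real.norm_eq_abs]
      calc |r| * ‖z‖ ≤ 1 * ‖z‖ := by
            apply mul_le_mul_of_nonneg_right _ (norm_nonneg z)
            rw [abs_le]; constructor <;> linarith [hr.1, hr.2]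
        _ = ‖z‖ := one_mul _
    have h2 : ‖(1:ℂ)‖ - ‖(r:ℂ)*z‖ ≤ ‖1 - (r:ℂ)*z‖ := norm_sub_norm_le _ _
    simp only [norm_one] at h2
    linarith
  have hmeas : Measurable f := by
    exact (measurable_const.sub (Complex.measurable_ofReal.mul_const z)).inv
  have hint : Integrable f ν := by
    refine Integrable.mono' (integrable_const ((1 - ‖z‖)⁻¹)) hmeas.aestronglyMeasurable ?_
    filter_upwards [hae] with r hr
    simp only [hf, norm_inv]
    exact inv_anti₀ hpos (hbound r hr)
  -- real part computation
  have hre_nonneg : ∀ r ∈ Set.Icc (0:ℝ) 1, 0 ≤ (f r).re := by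
    intro r hr
    have hrz : r * z.re ≤ 1 := by
      have : r * z.re ≤ |r| * |z.re| := by
        calc r * z.re ≤ |r * z.re| := le_abs_self _
          _ = |r| * |z.re| := abs_mul _ _
      have h1 : |z.re| ≤ ‖z‖ := Complex.abs_re_le_norm z
      have h2 : |r| ≤ 1 := by rw [abs_le]; constructor <;> linarith [hr.1, hr.2]
      nlinarith [abs_nonneg z.re, abs_nonneg r]
    have : (f r).re = (1 - r * z.re) / Complex.normSq (1 - (r:ℂ)*z) := by
      simp [hf, Complex.inv_re, Complex.sub_re, Complex.mul_re, Complex.ofReal_re,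
        Complex.ofReal_im, Complex.one_re]
    rw [this]
    exact div_nonneg (by linarith) (Complex.normSq_nonneg _)
  -- imaginary part
  set g : ℝ → ℝ := fun r => r / Complex.normSq (1 - (r:ℂ)*z) with hg
  have him : ∀ r, (f r).im = z.im * g r := by
    intro r
    simp only [hf, hg, Complex.inv_im, Complex.sub_im, Complex.mul_im, Complex.ofReal_re,
      Complex.ofReal_im, Complex.one_im, div_eq_mul_inv]
    ring
  have hg_nonneg : ∀ᵐ r ∂ν, 0 ≤ g r := by
    filter_upwards [hae] with r hr
    exact div_nonneg hr.1 (Complex.normSq_nonneg _)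
  set I := ∫ r, f r ∂ν with hI
  set G := ∫ r, g r ∂ν with hG
  have hG_nonneg : 0 ≤ G := integral_nonneg_of_ae hg_nonneg
  have him_int : Integrable (fun r => (f r).im) ν := hint.im
  have hre_int : Integrable (fun r => (f r).re) ν := hint.re
  have hIim' : ∫ r, (f r).im ∂ν = I.im := integral_im hint
  have hIim : I.im = z.im * G := by
    rw [← hIim']
    simp only [him]
    rw [integral_const_mul]
  have hIre : I.re = ∫ r, (f r).re ∂ν := (integral_re hint).symm
  have habs_im : ∫ r, |(f r).im| ∂ν = |I.im| := by
    have : ∀ᵐ r ∂ν, |(f r).im| = |z.im| * g r := by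
      filter_upwards [hg_nonneg] with r hgr
      rw [him, abs_mul, _root_.abs_of_nonneg hgr]
    rw [integral_congr_ae this, integral_const_mul, hIim, abs_mul, _root_.abs_of_nonneg hG_nonneg]
  -- pointwise inequality
  have hptwise : ∀ᵐ r ∂ν, ‖f r‖ ≤ (f r).re + |(f r).im| := by
    filter_upwards [hae] with r hr
    have := Complex.norm_le_abs_re_add_abs_im (f r)
    rwa [_root_.abs_of_nonneg (hre_nonneg r hr)] at this
  have hA : ∫ r, ‖f r‖ ∂ν ≤ I.re + |I.im| := by
    have h1 : ∫ r, ‖f r‖ ∂ν ≤ ∫ r, ((f r).re + |(f r).im|) ∂ν := by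
      refine integral_mono_ae ?_ (hre_int.add him_int.abs) hptwise
      simpa using hint.norm
    have h2 : ∫ r, ((f r).re + |(f r).im|) ∂ν = I.re + |I.im| := by
      rw [integral_add hre_int him_int.abs, ← hIre, habs_im]
    linarith
  have hIre_nonneg : 0 ≤ I.re := by
    rw [hIre]
    refine integral_nonneg_of_ae ?_
    filter_upwards [hae] with r hr using hre_nonneg r hr
  have hsq : I.re + |I.im| ≤ Real.sqrt 2 * ‖I‖ := by
    have h1 : ‖I‖^2 = I.re^2 + I.im^2 := by
      rw [Complex.sq_norm, Complex.normSq_apply]; ring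
    have h2 : (Real.sqrt 2)^2 = 2 := Real.sq_sqrt (by norm_num)
    nlinarith [sq_nonneg (I.re - |I.im|), _root_.sq_abs I.im, abs_nonneg I.im,
      norm_nonneg I, Real.sqrt_nonneg 2,
      mul_nonneg (Real.sqrt_nonneg 2) (norm_nonneg I),
      sq_nonneg (Real.sqrt 2 * ‖I‖ - (I.re + |I.im|))]
  have hLHS : ∫ r : ℝ, (‖1 - (r : ℂ) * z‖)⁻¹ ∂ν = ∫ r, ‖f r‖ ∂ν := by
    congr 1; funext r; rw [hf]; simp [map_inv₀]
  rw [hLHS, inv_mul_le_iff₀ (by positivity : (0:ℝ) < Real.sqrt 2)]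
  calc ∫ r, ‖f r‖ ∂ν ≤ I.re + |I.im| := hA
    _ ≤ Real.sqrt 2 * ‖I‖ := hsq

end
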